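/- Let A be a finite nonempty set of size m, let w : A → ℝ, and set λ := (∑_{x∈A} w(x))/m. Then ∑_{k=1}^{m} (min over subsets S ⊆ A with |S| = k of ∑_{x∈S}(w(x) − λ)) = −∑_{{x,y}⊆A, x≠y} max(w(x), w(y)) + λ·m(m−1)/2. -/

import Mathlib

open Finset

/-- A strictly monotone map `Fin k → Fin m` satisfies `i ≤ e i` (on values). -/
lemma strictMono_fin_le {k m : ℕ} (e : Fin k → Fin m) (he : StrictMono e) (i : Fin k) :
    (i : ℕ) ≤ (e i : ℕ) := by
  obtain ⟨n, hn⟩ := i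
  induction n with
  | zero => exact Nat.zero_le _
  | succ p ih =>
    have hp : p < k := Nat.lt_of_succ_lt hn
    have h1 : (e ⟨p, hp⟩ : ℕ) < (e ⟨p + 1, hn⟩ : ℕ) := by
      exact he (by simp [Fin.lt_def])
    have h2 := ih hp
    simp only [Fin.val_mk] at h1 h2 ⊢
    omega

/-- For a monotone function on `Fin m`, the sum over any subset `T` is at least the
sum of the first `T.card` values. -/
lemma sum_first_le_sum_subset {m : ℕ} (u : Fin m → ℝ) (hu : Monotone u)
    (T : Finset (Fin m)) :
    ∑ n ∈ Finset.range T.card, (if h : n < m then u ⟨n, h⟩ else 0) ≤ ∑ i ∈ T, u i := by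
  set k := T.card with hk
  have hkm : k ≤ m := by
    simpa using Finset.card_le_card (Finset.subset_univ T)
  let emb := T.orderEmbOfFin hk.symm
  have himgT : Finset.image (fun i : Fin k => emb i) Finset.univ = T := by
    apply Finset.coe_injective
    simp only [Finset.coe_image, Finset.coe_univ, Set.image_univ]
    exact Finset.range_orderEmbOfFin T hk.symm
  have hsum : ∑ i ∈ T, u i = ∑ i : Fin k, u (emb i) := by
    rw [← himgT, Finset.sum_image]
    intro a _ b _ hab
    exact emb.injective hab
  rw [hsum, ← Fin.sum_univ_eq_sum_range]
  apply Finset.sum_le_sum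
  intro i _
  have hik : (i : ℕ) < m := lt_of_lt_of_le i.2 hkm
  rw [dif_pos hik]
  apply hu
  have := strictMono_fin_le (fun i => emb i) (fun a b hab => emb.strictMono hab) i
  exact this

/-- For a finite nonempty set `A` of size `m`, weights `w : A → ℝ`, and mean
`λ = (∑_{x∈A} w x)/m`, the aggregated minima of deviation sums over subsets of each
cardinality `k = 1, …, m` equal the negative of the sum of pairwise maxima over unordered
pairs of distinct elements (written as half the sum over ordered pairs) plus `λ·m(m−1)/2`. -/
theorem aggregated_min_deviation_eq_neg_pair_max {α : Type*} [DecidableEq α]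
    (A : Finset α) (hA : A.Nonempty) (m : ℕ) (hm : A.card = m)
    (w : α → ℝ) (lam : ℝ) (hlam : lam = (∑ x ∈ A, w x) / (m : ℝ)) :
    ∑ k ∈ (Finset.Icc 1 m).attach,
        (A.powersetCard k.1).inf'
          (Finset.powersetCard_nonempty.mpr
            (by have h := Finset.mem_Icc.mp k.2; omega))
          (fun S => ∑ x ∈ S, (w x - lam))
      = -((∑ p ∈ A.offDiag, max (w p.1) (w p.2)) / 2)
        + lam * ((m : ℝ) * ((m : ℝ) - 1) / 2) := by
  have hm0 : 0 < m := hm ▸ Finset.card_pos.mpr hA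
  obtain ⟨e⟩ : Nonempty (A ≃ Fin m) := ⟨A.equivFinOfCardEq hm⟩
  set v : Fin m → α := fun i => ((e.symm i : A) : α) with hv
  have hv_inj : Function.Injective v := by
    intro a b hab
    apply e.symm.injective
    exact Subtype.ext hab
  set σ : Equiv.Perm (Fin m) := Tuple.sort (w ∘ v) with hσ
  set f : Fin m → α := fun i => v (σ i) with hf
  have hf_inj : Function.Injective f := hv_inj.comp σ.injective
  have hf_mem : ∀ i, f i ∈ A := fun i => (e.symm (σ i)).2
  have hf_mono : Monotone fun i => w (f i) := Tuple.monotone_sort (w ∘ v)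
  have himg : Finset.image f Finset.univ = A := by
    apply Finset.eq_of_subset_of_card_le
    · intro x hx
      obtain ⟨i, _, rfl⟩ := Finset.mem_image.mp hx
      exact hf_mem i
    · rw [hm, Finset.card_image_of_injective _ hf_inj, Finset.card_univ, Fintype.card_fin]
  set u : Fin m → ℝ := fun i => w (f i) - lam with hu
  have hu_mono : Monotone u := fun a b hab => by
    simpa [hu] using hf_mono hab
  have hwsum : ∑ i, w (f i) = ∑ x ∈ A, w x := by
    rw [← himg, Finset.sum_image (fun a _ b _ h => hf_inj h)]
  have hu_sum : ∑ i, u i = 0 := by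
    simp only [hu, Finset.sum_sub_distrib, Finset.sum_const, Finset.card_univ,
      Fintype.card_fin, nsmul_eq_mul, hwsum, hlam]
    field_simp
    ring
  set U : ℕ → ℝ := fun n => if h : n < m then u ⟨n, h⟩ else 0 with hU
  -- the value of each inner minimum
  have hmin : ∀ k, 1 ≤ k → k ≤ m → ∀ (ne : (A.powersetCard k).Nonempty),
      (A.powersetCard k).inf' ne (fun S => ∑ x ∈ S, (w x - lam))
        = ∑ n ∈ Finset.range k, U n := by
    intro k hk1 hk2 ne
    apply le_antisymm
    · -- inf' ≤ sum over the first k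
      set S₀ : Finset α := Finset.image (fun i : Fin k => f (Fin.castLE hk2 i)) Finset.univ
        with hS₀
      have hS₀mem : S₀ ∈ A.powersetCard k := by
        rw [Finset.mem_powersetCard]
        constructor
        · intro x hx
          obtain ⟨i, _, rfl⟩ := Finset.mem_image.mp hx
          exact hf_mem _
        · have hinj : Function.Injective (fun i : Fin k => f (Fin.castLE hk2 i)) :=
            fun a b h => (Fin.strictMono_castLE hk2).injective (hf_inj h)
          rw [hS₀, Finset.card_image_of_injective _ hinj, Finset.card_univ, Fintype.card_fin]
      refine le_trans (Finset.inf'_le _ hS₀mem) ?_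
      rw [hS₀, Finset.sum_image (fun a _ b _ h =>
        (Fin.strictMono_castLE hk2).injective (hf_inj h)), ← Fin.sum_univ_eq_sum_range]
      apply le_of_eq
      apply Finset.sum_congr rfl
      intro i _
      have hik : (i : ℕ) < m := lt_of_lt_of_le i.2 hk2
      simp only [hU, dif_pos hik]
      rfl
    · -- every S of size k has sum ≥ sum of first k
      apply Finset.le_inf'
      intro S hS
      rw [Finset.mem_powersetCard] at hS
      obtain ⟨hSA, hSk⟩ := hS
      set T : Finset (Fin m) := Finset.univ.filter (fun i => f i ∈ S) with hT
      have himgT : Finset.image f T = S := by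
        apply Finset.Subset.antisymm
        · intro x hx
          obtain ⟨i, hi, rfl⟩ := Finset.mem_image.mp hx
          exact (Finset.mem_filter.mp hi).2
        · intro x hx
          have hxA : x ∈ A := hSA hx
          rw [← himg] at hxA
          obtain ⟨i, _, rfl⟩ := Finset.mem_image.mp hxA
          exact Finset.mem_image.mpr ⟨i, Finset.mem_filter.mpr ⟨Finset.mem_univ _, hx⟩, rfl⟩
      have hTk : T.card = k := by
        rw [← hSk, ← himgT, Finset.card_image_of_injective _ hf_inj]
      have := sum_first_le_sum_subset u hu_mono T
      rw [hTk] at this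
      refine le_trans (le_of_eq ?_) (le_trans this (le_of_eq ?_))
      · rfl
      · rw [← himgT, Finset.sum_image (fun a _ b _ h => hf_inj h)]
  -- rewrite the left side
  have hL : ∑ k ∈ (Finset.Icc 1 m).attach,
      (A.powersetCard k.1).inf'
        (Finset.powersetCard_nonempty.mpr
          (by have h := Finset.mem_Icc.mp k.2; omega))
        (fun S => ∑ x ∈ S, (w x - lam))
      = ∑ k ∈ Finset.Icc 1 m, ∑ n ∈ Finset.range k, U n := by
    rw [← Finset.sum_attach (Finset.Icc 1 m) (fun k => ∑ n ∈ Finset.range k, U n)]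
    apply Finset.sum_congr rfl
    intro k _
    have hk := Finset.mem_Icc.mp k.2
    exact hmin k.1 hk.1 hk.2 _
  rw [hL]
  -- swap the double sum
  have hswap : ∑ k ∈ Finset.Icc 1 m, ∑ n ∈ Finset.range k, U n
      = ∑ n ∈ Finset.range m, ((m - n : ℕ) : ℝ) * U n := by
    rw [Finset.sum_comm' (t' := Finset.range m) (s' := fun n => Finset.Icc (n+1) m)
      (fun k n => by simp only [Finset.mem_Icc, Finset.mem_range]; omega)]
    apply Finset.sum_congr rfl
    intro n hn
    rw [Finset.sum_const, Nat.card_Icc, nsmul_eq_mul]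
    norm_num
    exact Or.inl (by omega)
  rw [hswap]
  -- rewrite the off-diagonal sum
  have hoff : ∑ p ∈ A.offDiag, max (w p.1) (w p.2)
      = ∑ p ∈ (Finset.univ : Finset (Fin m)).offDiag, max (w (f p.1)) (w (f p.2)) := by
    symm
    apply Finset.sum_bij (i := fun (p : Fin m × Fin m) _ => (f p.1, f p.2))
    · intro p hp
      rw [Finset.mem_offDiag] at hp ⊢
      exact ⟨hf_mem _, hf_mem _, fun h => hp.2.2 (hf_inj h)⟩
    · intro p _ q _ h
      exact Prod.ext (hf_inj (congrArg Prod.fst h)) (hf_inj (congrArg Prod.snd h))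
    · intro b hb
      rw [Finset.mem_offDiag] at hb
      obtain ⟨h1, h2, h3⟩ := hb
      rw [← himg] at h1 h2
      obtain ⟨i, _, hi⟩ := Finset.mem_image.mp h1
      obtain ⟨j, _, hj⟩ := Finset.mem_image.mp h2
      refine ⟨(i, j), ?_, by simp [hi, hj]⟩
      rw [Finset.mem_offDiag]
      refine ⟨Finset.mem_univ _, Finset.mem_univ _, fun h => h3 ?_⟩
      rw [← hi, ← hj]
      exact congrArg f h
    · intro p _
      rfl
  have hoffFilter : (Finset.univ : Finset (Fin m)).offDiag
      = (Finset.univ ×ˢ Finset.univ).filter (fun p => p.1 ≠ p.2) := by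
    ext p
    simp [Finset.mem_offDiag]
  have hIio : ∀ j : Fin m, (Finset.univ.filter (fun i : Fin m => i < j)).card = (j : ℕ) := by
    intro j
    rw [show Finset.univ.filter (fun i : Fin m => i < j) = Finset.Iio j by ext i; simp]
    exact Fin.card_Iio j
  have hinner : ∀ (j : Fin m) (c : ℝ), (∑ i : Fin m, if i < j then c else 0)
      = (j : ℝ) * c := by
    intro j c
    rw [← Finset.sum_filter, Finset.sum_const, hIio j, nsmul_eq_mul]
  have hoff2 : ∑ p ∈ (Finset.univ : Finset (Fin m)).offDiag, max (w (f p.1)) (w (f p.2))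
      = 2 * ∑ j : Fin m, (j : ℝ) * w (f j) := by
    rw [hoffFilter, Finset.sum_filter, Finset.sum_product]
    have hsplit : ∀ i j : Fin m, (if i ≠ j then max (w (f i)) (w (f j)) else 0)
        = (if i < j then w (f j) else 0) + (if j < i then w (f i) else 0) := by
      intro i j
      rcases lt_trichotomy i j with h | h | h
      · rw [if_pos (ne_of_lt h), if_pos h, if_neg (asymm h),
          max_eq_right (hf_mono h.le), add_zero]
      · simp [h]
      · rw [if_pos (ne_of_gt h), if_neg (asymm h), if_pos h,
          max_eq_left (hf_mono h.le), zero_add]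
    simp_rw [hsplit, Finset.sum_add_distrib]
    have hB : (∑ i : Fin m, ∑ j : Fin m, if j < i then w (f i) else 0)
        = ∑ j : Fin m, (j : ℝ) * w (f j) := by
      apply Finset.sum_congr rfl
      intro i _
      exact hinner i (w (f i))
    have hA : (∑ i : Fin m, ∑ j : Fin m, if i < j then w (f j) else 0)
        = ∑ j : Fin m, (j : ℝ) * w (f j) := by
      rw [Finset.sum_comm]
      apply Finset.sum_congr rfl
      intro j _
      exact hinner j (w (f j))
    rw [hA, hB]
    ring
  -- final algebra
  have hLfin : ∑ n ∈ Finset.range m, ((m - n : ℕ) : ℝ) * U n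
      = ∑ i : Fin m, ((m : ℝ) - (i : ℕ)) * u i := by
    rw [← Fin.sum_univ_eq_sum_range (fun n => ((m - n : ℕ) : ℝ) * U n) m]
    apply Finset.sum_congr rfl
    intro i _
    have h1 : (i : ℕ) < m := i.2
    simp only [hU, dif_pos h1, Fin.eta]
    rw [Nat.cast_sub h1.le]
  have hG : (∑ i : Fin m, ((i : ℕ) : ℝ)) * 2 = (m : ℝ) * ((m : ℝ) - 1) := by
    rw [Fin.sum_univ_eq_sum_range (fun n => ((n : ℕ) : ℝ)) m]
    have h := Finset.sum_range_id_mul_two m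
    have h2 : ((∑ i ∈ Finset.range m, i : ℕ) : ℝ) * 2 = ((m * (m - 1) : ℕ) : ℝ) := by
      exact_mod_cast congrArg (Nat.cast : ℕ → ℝ) h
    rw [Nat.cast_sum] at h2
    rw [h2]
    push_cast [Nat.cast_sub hm0]
    ring
  have hwu : ∀ j : Fin m, w (f j) = u j + lam := by
    intro j
    simp [hu]
  rw [hoff, hoff2, hLfin]
  have hS1 : ∑ i : Fin m, ((m : ℝ) - (i : ℕ)) * u i
      = - ∑ i : Fin m, ((i : ℕ) : ℝ) * u i := by
    have : ∑ i : Fin m, ((m : ℝ) - (i : ℕ)) * u i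
        = (m : ℝ) * (∑ i : Fin m, u i) - ∑ i : Fin m, ((i : ℕ) : ℝ) * u i := by
      rw [Finset.mul_sum, ← Finset.sum_sub_distrib]
      apply Finset.sum_congr rfl
      intro i _
      ring
    rw [this, hu_sum]
    ring
  rw [hS1]
  have hexp : ∑ j : Fin m, ((j : ℕ) : ℝ) * w (f j)
      = (∑ i : Fin m, ((i : ℕ) : ℝ) * u i) + lam * ∑ i : Fin m, ((i : ℕ) : ℝ) := by
    rw [Finset.mul_sum, ← Finset.sum_add_distrib]
    apply Finset.sum_congr rfl
    intro i _
    rw [hwu i]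
    ring
  rw [hexp]
  linear_combination (lam / 2) * hG
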